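/- Let N ≥ 1, let y_1, …, y_N be distinct points in ℝ², let λ > 0, and let f = (f_1, …, f_N) ∈ ℝ^N be nonzero. Then Σ_{j,k=1}^N f_j f_k / (|y_j − y_k|² + λ) > 0; that is, the N×N matrix with entries 1/(|y_j − y_k|² + λ) is positive definite. -/

import Mathlib

open Real
noncomputable section

open MeasureTheory Set Filter Nat

private lemma aux_pow_psd {N : ℕ} (g a b : Fin N → ℝ) (n : ℕ) :
    0 ≤ ∑ j, ∑ k, g j * g k * (a j * a k + b j * b k) ^ n := by
  have key : ∑ j, ∑ k, g j * g k * (a j * a k + b j * b k) ^ n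
      = ∑ m ∈ Finset.range (n+1),
          ((∑ j, g j * a j ^ m * b j ^ (n - m)) ^ 2 * (n.choose m : ℝ)) := by
    simp_rw [add_pow, Finset.mul_sum]
    calc ∑ j, ∑ k, ∑ m ∈ Finset.range (n+1),
          g j * g k * ((a j * a k) ^ m * (b j * b k) ^ (n - m) * (n.choose m : ℝ))
        = ∑ j, ∑ m ∈ Finset.range (n+1), ∑ k,
          g j * g k * ((a j * a k) ^ m * (b j * b k) ^ (n - m) * (n.choose m : ℝ)) :=
          Finset.sum_congr rfl fun j _ => Finset.sum_comm
      _ = ∑ m ∈ Finset.range (n+1), ∑ j, ∑ k,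
          g j * g k * ((a j * a k) ^ m * (b j * b k) ^ (n - m) * (n.choose m : ℝ)) :=
          Finset.sum_comm
      _ = ∑ m ∈ Finset.range (n+1),
          ((∑ j, g j * a j ^ m * b j ^ (n - m)) ^ 2 * (n.choose m : ℝ)) := by
          refine Finset.sum_congr rfl fun m _ => ?_
          rw [sq, Finset.sum_mul_sum, Finset.sum_mul]
          refine Finset.sum_congr rfl fun j _ => ?_
          rw [Finset.sum_mul]
          refine Finset.sum_congr rfl fun k _ => ?_
          ring
  rw [key]
  exact Finset.sum_nonneg fun m _ => by positivity

private lemma aux_gauss_nonneg {N : ℕ} (y : Fin N → EuclideanSpace ℝ (Fin 2))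
    (f : Fin N → ℝ) {t : ℝ} (ht : 0 ≤ t) :
    0 ≤ ∑ j, ∑ k, f j * f k * Real.exp (-‖y j - y k‖ ^ 2 * t) := by
  set g : Fin N → ℝ := fun j => f j * Real.exp (-‖y j‖ ^ 2 * t) with hg
  have hexp : ∀ j k, f j * f k * Real.exp (-‖y j - y k‖ ^ 2 * t)
      = g j * g k * Real.exp (2 * t * (inner ℝ (y j) (y k) : ℝ)) := by
    intro j k
    simp only [hg]
    rw [show f j * Real.exp (-‖y j‖ ^ 2 * t) * (f k * Real.exp (-‖y k‖ ^ 2 * t))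
          * Real.exp (2 * t * (inner ℝ (y j) (y k) : ℝ))
        = f j * f k * (Real.exp (-‖y j‖ ^ 2 * t) * Real.exp (-‖y k‖ ^ 2 * t)
            * Real.exp (2 * t * (inner ℝ (y j) (y k) : ℝ))) from by ring,
      ← Real.exp_add, ← Real.exp_add, norm_sub_sq_real]
    congr 2
    ring
  simp_rw [hexp]
  have hip : ∀ j k : Fin N, (inner ℝ (y j) (y k) : ℝ) = y j 0 * y k 0 + y j 1 * y k 1 := by
    intro j k
    simp [PiLp.inner_apply, RCLike.inner_apply, Fin.sum_univ_two]
    ring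
  have hterm : ∀ j k : Fin N, g j * g k * Real.exp (2 * t * (inner ℝ (y j) (y k) : ℝ))
      = ∑' n : ℕ, g j * g k * ((2 * t * (inner ℝ (y j) (y k) : ℝ)) ^ n / (n ! : ℝ)) := by
    intro j k
    rw [tsum_mul_left, Real.exp_eq_exp_ℝ, NormedSpace.exp_eq_tsum_div]
  simp_rw [hterm]
  have hsum : ∀ j k : Fin N,
      Summable (fun n : ℕ => g j * g k * ((2 * t * (inner ℝ (y j) (y k) : ℝ)) ^ n / (n ! : ℝ))) :=
    fun j k => (Real.summable_pow_div_factorial _).mul_left _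
  calc (0:ℝ)
      ≤ ∑' n : ℕ, ∑ j, ∑ k, g j * g k * ((2 * t * (inner ℝ (y j) (y k) : ℝ)) ^ n / (n ! : ℝ)) := by
        refine tsum_nonneg fun n => ?_
        have hre : ∀ j k : Fin N,
            g j * g k * ((2 * t * (inner ℝ (y j) (y k) : ℝ)) ^ n / (n ! : ℝ))
            = ((2*t) ^ n / (n ! : ℝ)) * (g j * g k * (y j 0 * y k 0 + y j 1 * y k 1) ^ n) := by
          intro j k; rw [mul_pow, hip]; ring
        simp_rw [hre, ← Finset.mul_sum]
        exact mul_nonneg (by positivity) (aux_pow_psd g (fun j => y j 0) (fun j => y j 1) n)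
    _ = ∑ j, ∑ k, ∑' n : ℕ,
          g j * g k * ((2 * t * (inner ℝ (y j) (y k) : ℝ)) ^ n / (n ! : ℝ)) := by
        rw [Summable.tsum_finsetSum fun j _ => summable_sum fun k _ => hsum j k]
        exact Finset.sum_congr rfl fun j _ => Summable.tsum_finsetSum fun k _ => hsum j k

/-- For distinct points `y_1, …, y_N` of `ℝ²`, `λ > 0`, and
`f ∈ ℝ^N` nonzero, `Σ_{j,k} f_j f_k / (|y_j - y_k|² + λ) > 0`: the matrix with
entries `1/(|y_j - y_k|² + λ)` is positive definite. -/
theorem stmt_8 (N : ℕ) (hN : 1 ≤ N)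
    (y : Fin N → EuclideanSpace ℝ (Fin 2)) (hy : Function.Injective y)
    (lam : ℝ) (hlam : 0 < lam)
    (f : Fin N → ℝ) (hf : f ≠ 0) :
    0 < ∑ j, ∑ k, f j * f k / (‖y j - y k‖^2 + lam) := by
  have hc : ∀ j k : Fin N, 0 < ‖y j - y k‖ ^ 2 + lam := fun j k => by positivity
  have base : ∀ {b : ℝ}, 0 < b → ∫ t in Ioi (0:ℝ), exp (-b * t) = 1 / b := by
    intro b hb
    have h := MeasureTheory.integral_comp_mul_left_Ioi (fun x => exp (-x)) 0 hb
    simp only [mul_zero, integral_exp_neg_Ioi, neg_zero, exp_zero, smul_eq_mul,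
      mul_one, neg_mul] at h
    rw [show (fun t:ℝ => exp (-b*t)) = fun t:ℝ => exp (-(b*t)) by ext t; ring_nf]
    rw [h, one_div]
  have hint : ∀ j k : Fin N, f j * f k / (‖y j - y k‖ ^ 2 + lam)
      = ∫ t in Ioi (0:ℝ), f j * f k * exp (-(‖y j - y k‖ ^ 2 + lam) * t) := by
    intro j k
    rw [MeasureTheory.integral_const_mul, base (hc j k)]
    ring
  have hintgr : ∀ j k : Fin N,
      IntegrableOn (fun t => f j * f k * exp (-(‖y j - y k‖ ^ 2 + lam) * t)) (Ioi 0) volume :=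
    fun j k => (exp_neg_integrableOn_Ioi 0 (hc j k)).const_mul _
  simp_rw [hint]
  rw [show ∑ j, ∑ k, ∫ t in Ioi (0:ℝ), f j * f k * exp (-(‖y j - y k‖ ^ 2 + lam) * t)
      = ∫ t in Ioi (0:ℝ), ∑ j, ∑ k, f j * f k * exp (-(‖y j - y k‖ ^ 2 + lam) * t) from by
    rw [MeasureTheory.integral_finset_sum _ fun j _ =>
      integrable_finset_sum _ fun k _ => hintgr j k]
    exact Finset.sum_congr rfl fun j _ =>
      (MeasureTheory.integral_finset_sum _ fun k _ => hintgr j k).symm]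
  have hsplit : ∀ t : ℝ, ∑ j, ∑ k, f j * f k * exp (-(‖y j - y k‖ ^ 2 + lam) * t)
      = (∑ j, ∑ k, f j * f k * exp (-‖y j - y k‖ ^ 2 * t)) * exp (-lam * t) := by
    intro t
    rw [Finset.sum_mul]
    refine Finset.sum_congr rfl fun j _ => ?_
    rw [Finset.sum_mul]
    refine Finset.sum_congr rfl fun k _ => ?_
    rw [show -(‖y j - y k‖ ^ 2 + lam) * t = -‖y j - y k‖ ^ 2 * t + -lam * t from by ring,
      Real.exp_add]
    ring
  have hQnonneg : ∀ t : ℝ, 0 < t →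
      0 ≤ ∑ j, ∑ k, f j * f k * exp (-(‖y j - y k‖ ^ 2 + lam) * t) := by
    intro t ht
    rw [hsplit t]
    exact mul_nonneg (aux_gauss_nonneg y f ht.le) (exp_pos _).le
  rw [MeasureTheory.setIntegral_pos_iff_support_of_nonneg_ae
    ((ae_restrict_iff' measurableSet_Ioi).2 (ae_of_all _ fun t ht => hQnonneg t ht))
    (integrable_finset_sum _ fun j _ => integrable_finset_sum _ fun k _ => hintgr j k)]
  have hfpos : 0 < ∑ j, f j ^ 2 := by
    obtain ⟨j, hj⟩ := Function.ne_iff.mp hf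
    exact Finset.sum_pos' (fun i _ => sq_nonneg _)
      ⟨j, Finset.mem_univ j, pow_pos (abs_pos.mpr hj) 2 |>.trans_le (by rw [sq_abs])⟩
  have htend : Tendsto (fun t : ℝ => ∑ j, ∑ k, f j * f k * exp (-‖y j - y k‖ ^ 2 * t))
      atTop (nhds (∑ j, f j ^ 2)) := by
    have hterm : ∀ j k : Fin N,
        Tendsto (fun t : ℝ => f j * f k * exp (-‖y j - y k‖ ^ 2 * t)) atTop
        (nhds (if k = j then f j * f k else 0)) := by
      intro j k
      by_cases hjk : k = j
      · subst hjk
        simp only [sub_self, norm_zero, if_pos rfl]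
        simpa using (tendsto_const_nhds : Tendsto (fun _ : ℝ => f k * f k) atTop _)
      · simp only [hjk, if_false]
        have hd : 0 < ‖y j - y k‖ ^ 2 :=
          pow_pos (norm_pos_iff.mpr (sub_ne_zero.2 fun h => hjk (hy h).symm)) 2
        have h0 : Tendsto (fun t : ℝ => exp (-‖y j - y k‖ ^ 2 * t)) atTop (nhds 0) :=
          tendsto_exp_atBot.comp (tendsto_id.const_mul_atTop_of_neg (by linarith))
        have := h0.const_mul (f j * f k)
        simpa using this
    have h := tendsto_finset_sum Finset.univ fun j (_ : j ∈ Finset.univ) =>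
      tendsto_finset_sum Finset.univ fun k (_ : k ∈ Finset.univ) => hterm j k
    simpa [Finset.sum_ite_eq, sq] using h
  obtain ⟨T, hT⟩ := eventually_atTop.mp (htend.eventually (eventually_gt_nhds hfpos))
  have hsub : Ioi (max T 0) ⊆ Function.support (fun t => ∑ j, ∑ k,
      f j * f k * exp (-(‖y j - y k‖ ^ 2 + lam) * t)) ∩ Ioi 0 := by
    intro t ht
    have ht0 : 0 < t := lt_of_le_of_lt (le_max_right T 0) ht
    have htT : T ≤ t := le_of_lt (lt_of_le_of_lt (le_max_left T 0) ht)
    refine ⟨?_, ht0⟩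
    rw [Function.mem_support, hsplit t]
    exact ne_of_gt (mul_pos (hT t htT) (exp_pos _))
  have hvol : (0:ENNReal) < volume (Ioi (max T 0)) := by
    rw [Real.volume_Ioi]
    exact ENNReal.zero_lt_top
  exact hvol.trans_le (measure_mono hsub)
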